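/- Let k ∈ ℝ, k ≠ 0, b ∈ ℂ, A = ik (scalar), B(x,t) = b·(cos(kx - k²t), sin(kx - k²t)) viewed as a map ℂ² → ℂ (row vector), C = B* (its conjugate transpose), and X(x,t) = 1 + |b|²(x - 2kt). With σ₁ = [[0,i],[-i,0]], σ₂ = I, γ = 0, these satisfy: ∂B/∂x = -(A·B·σ₂ + B·γ)·σ₁⁻¹, ∂X/∂x = B·σ₂·C, ∂B/∂t = iA·∂B/∂x, and the Lyapunov equation A·X + X·A* + B·σ₁·B* = 0. -/

import Mathlib

open Matrix

noncomputable section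

def sigma1 : Matrix (Fin 2) (Fin 2) ℂ := !![0, Complex.I; -Complex.I, 0]
def sigma2 : Matrix (Fin 2) (Fin 2) ℂ := 1
def gamma0 : Matrix (Fin 2) (Fin 2) ℂ := 0

/-- The 1×2 operator B(x,t) of the rational soliton. -/
def Bm (k : ℝ) (b : ℂ) (x t : ℝ) : Matrix (Fin 1) (Fin 2) ℂ :=
  !![b * (Real.cos (k * x - k ^ 2 * t) : ℂ), b * (Real.sin (k * x - k ^ 2 * t) : ℂ)]

def Am (k : ℝ) : Matrix (Fin 1) (Fin 1) ℂ := !![Complex.I * k]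

def Xm (k : ℝ) (b : ℂ) (x t : ℝ) : Matrix (Fin 1) (Fin 1) ℂ :=
  !![1 + ((‖b‖ ^ 2 * (x - 2 * k * t) : ℝ) : ℂ)]

/-- The x-derivative of B prescribed by the prevessel equation. -/
def Bx (k : ℝ) (b : ℂ) (x t : ℝ) : Matrix (Fin 1) (Fin 2) ℂ :=
  -(Am k * Bm k b x t * sigma2 + Bm k b x t * gamma0) * sigma1⁻¹

lemma sigma1_inv : sigma1⁻¹ = sigma1 := by
  apply Matrix.inv_eq_right_inv
  ext i j
  fin_cases i <;> fin_cases j <;>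
    simp [sigma1, Matrix.mul_apply, Fin.sum_univ_two, Complex.I_mul_I]

lemma Bx_simp (k : ℝ) (b : ℂ) (x t : ℝ) :
    Bx k b x t = -(Am k * Bm k b x t) * sigma1 := by
  rw [Bx, sigma1_inv]
  simp [sigma2, gamma0]

lemma Bx_eq (k : ℝ) (b : ℂ) (x t : ℝ) :
    Bx k b x t = !![-((k : ℂ) * b * (Real.sin (k * x - k ^ 2 * t) : ℂ)),
      (k : ℂ) * b * (Real.cos (k * x - k ^ 2 * t) : ℂ)] := by
  rw [Bx_simp]
  ext i j
  fin_cases i <;> fin_cases j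
  · simp [Am, Bm, sigma1, Matrix.mul_apply, Fin.sum_univ_two, Fin.sum_univ_one]
    linear_combination ((k:ℂ) * b * Complex.sin ((k:ℂ) * x - (k:ℂ) ^ 2 * t)) * Complex.I_sq
  · simp [Am, Bm, sigma1, Matrix.mul_apply, Fin.sum_univ_two, Fin.sum_univ_one]
    linear_combination (-(k:ℂ) * b * Complex.cos ((k:ℂ) * x - (k:ℂ) ^ 2 * t)) * Complex.I_sq

lemma hb_conj (b : ℂ) : b * (starRingEnd ℂ) b = ((‖b‖ ^ 2 : ℝ) : ℂ) := by
  rw [Complex.mul_conj]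
  norm_cast
  simp [Complex.normSq_eq_norm_sq]

lemma hcs (θ : ℝ) : ((Real.cos θ : ℝ) : ℂ) ^ 2 + ((Real.sin θ : ℝ) : ℂ) ^ 2 = 1 := by
  norm_cast
  exact Real.cos_sq_add_sin_sq θ

/-- The rational soliton data (A = ik, B, C = B*, X) forms a symmetric KdV prevessel. -/
theorem stmt_16 (k : ℝ) (hk : k ≠ 0) (b : ℂ) :
    (∀ (x t : ℝ) (i : Fin 1) (j : Fin 2),
      HasDerivAt (fun y => Bm k b y t i j) (Bx k b x t i j) x) ∧
    (∀ (x t : ℝ) (i j : Fin 1),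
      HasDerivAt (fun y => Xm k b y t i j)
        ((Bm k b x t * sigma2 * (Bm k b x t)ᴴ) i j) x) ∧
    (∀ (x t : ℝ) (i : Fin 1) (j : Fin 2),
      HasDerivAt (fun s => Bm k b x s i j)
        ((Complex.I • (Am k * Bx k b x t)) i j) t) ∧
    (∀ x t : ℝ, Am k * Xm k b x t + Xm k b x t * (Am k)ᴴ +
        Bm k b x t * sigma1 * (Bm k b x t)ᴴ = 0) := by
  have hθx : ∀ x t : ℝ, HasDerivAt (fun y : ℝ => k * y - k ^ 2 * t) k x := by
    intro x t
    simpa using ((hasDerivAt_id x).const_mul k).sub_const (k ^ 2 * t)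
  have hθt : ∀ x t : ℝ, HasDerivAt (fun s : ℝ => k * x - k ^ 2 * s) (-(k ^ 2)) t := by
    intro x t
    simpa using ((hasDerivAt_id t).const_mul (k ^ 2)).const_sub (k * x)
  refine ⟨?_, ?_, ?_, ?_⟩
  · intro x t i j
    fin_cases i <;> fin_cases j
    · have := (((hθx x t).cos).ofReal_comp).const_mul b
      simpa [Bm, Bx_eq, mul_comm, mul_assoc, mul_left_comm] using this
    · have := (((hθx x t).sin).ofReal_comp).const_mul b
      simpa [Bm, Bx_eq, mul_comm, mul_assoc, mul_left_comm] using this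
  · intro x t i j
    fin_cases i; fin_cases j
    have h : HasDerivAt (fun y : ℝ => Xm k b y t 0 0) ((‖b‖ ^ 2 : ℝ) : ℂ) x := by
      have h1 : HasDerivAt (fun y : ℝ => (‖b‖ ^ 2 * (y - 2 * k * t) : ℝ)) (‖b‖ ^ 2) x := by
        simpa using ((hasDerivAt_id x).sub_const (2 * k * t)).const_mul (‖b‖ ^ 2)
      simpa [Xm] using (h1.ofReal_comp).const_add 1
    convert h using 1
    show (Bm k b x t * sigma2 * (Bm k b x t)ᴴ) 0 0 = ((‖b‖ ^ 2 : ℝ) : ℂ)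
    simp only [Bm, sigma2, Matrix.mul_one, Matrix.mul_apply, Fin.sum_univ_two,
      Matrix.conjTranspose_apply, Fin.mk_zero, Fin.mk_one, Fin.isValue, Matrix.cons_val_zero,
      Matrix.cons_val_one, Matrix.head_cons, Matrix.cons_val', Matrix.empty_val',
      Matrix.cons_val_fin_one, Matrix.of_apply, Matrix.head_fin_const, Complex.star_def, _root_.map_mul, Complex.conj_ofReal]
    linear_combination (((Real.cos (k * x - k ^ 2 * t) : ℝ) : ℂ) ^ 2 +
      ((Real.sin (k * x - k ^ 2 * t) : ℝ) : ℂ) ^ 2) * hb_conj b +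
      ((‖b‖ ^ 2 : ℝ) : ℂ) * hcs (k * x - k ^ 2 * t)
    rfl
  · intro x t i j
    fin_cases i <;> fin_cases j
    · have := (((hθt x t).cos).ofReal_comp).const_mul b
      convert this using 1
      · rfl
      · rfl
      simp [Bx_eq, Am, Matrix.mul_apply, Fin.sum_univ_one, Bm]
      linear_combination (-(k:ℂ) ^ 2 * b * Complex.sin ((k:ℂ) * x - (k:ℂ) ^ 2 * t)) * Complex.I_sq
    · have := (((hθt x t).sin).ofReal_comp).const_mul b
      convert this using 1
      · rfl
      · rfl
      simp [Bx_eq, Am, Matrix.mul_apply, Fin.sum_univ_one, Bm]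
      linear_combination ((k:ℂ) ^ 2 * b * Complex.cos ((k:ℂ) * x - (k:ℂ) ^ 2 * t)) * Complex.I_sq
  · intro x t
    ext i j
    fin_cases i; fin_cases j
    simp only [Am, Xm, Bm, sigma1, Matrix.add_apply, Matrix.mul_apply, Matrix.zero_apply,
      Fin.sum_univ_two, Fin.sum_univ_one, Matrix.conjTranspose_apply, Fin.mk_zero, Fin.mk_one,
      Fin.isValue, Matrix.cons_val_zero, Matrix.cons_val_one, Matrix.head_cons, Matrix.cons_val',
      Matrix.empty_val', Matrix.cons_val_fin_one, Matrix.of_apply, Matrix.head_fin_const, Complex.star_def, _root_.map_mul, map_add, _root_.map_one,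
      Complex.conj_ofReal, Complex.conj_I]
    ring
end
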